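/- Along any solution of the conformal geodesic equation ∇_u a = −(1/2)|a|² u + P♯u in arc-length parametrization (|u|=1, ⟨u,a⟩=0) with nonvanishing curvature, the product of curvature and torsion satisfies κτ = P(T,B), where (T,N,B) is the Frenet frame. In dimension 3 this equals Ric(T,B). -/

import Mathlib

open scoped RealInnerProductSpace

noncomputable section

/-- along a solution of the conformal geodesic equation
`∇_u a = −(1/2)|a|² u + P♯u` in arc-length parametrization, with Frenet data
`a = κN`, `b = ∇_u a = −κ²T + κ'N + κτB`, one has `κτ = P(T,B)`, and in dimension 3
(Schouten `P = Ric − (R/4)g`) this equals `Ric(T,B)`. The tangent space along the curve is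
modelled on `EuclideanSpace ℝ (Fin 3)`. -/
theorem conformal_geodesic_kappa_tau
    (T N B a b PsharpT : EuclideanSpace ℝ (Fin 3))
    (κ τ κ' R : ℝ)
    (P Ric : EuclideanSpace ℝ (Fin 3) → EuclideanSpace ℝ (Fin 3) → ℝ)
    (hκpos : 0 < κ)
    -- orthonormal Frenet frame
    (hTT : ⟪T, T⟫ = 1) (hNN : ⟪N, N⟫ = 1) (hBB : ⟪B, B⟫ = 1)
    (hTN : ⟪T, N⟫ = 0) (hTB : ⟪T, B⟫ = 0) (hNB : ⟪N, B⟫ = 0)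
    -- acceleration and Frenet expression for b = ∇_u a
    (ha : a = κ • N)
    (hb : b = (-(κ ^ 2)) • T + κ' • N + (κ * τ) • B)
    -- P♯ raises an index of P in the T-slot
    (hsharp : ∀ v, ⟪PsharpT, v⟫ = P T v)
    -- the conformal geodesic equation in arc-length parametrization (u = T)
    (hcg : b = (-(1 / 2) * ⟪a, a⟫) • T + PsharpT)
    -- the 3-dimensional Schouten tensor P = Ric − (R/4) g
    (hSchouten : ∀ v w, P v w = Ric v w - (R / 4) * ⟪v, w⟫) :
    κ * τ = P T B ∧ P T B = Ric T B := by
  have h1 : ⟪b, B⟫ = κ * τ := by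
    rw [hb]
    simp [inner_add_left, inner_smul_left, hTB, hNB, hBB]
    rw [← real_inner_self_eq_norm_sq, hBB, mul_one]
  have h2 : ⟪b, B⟫ = P T B := by
    rw [hcg]
    simp [inner_add_left, inner_smul_left, hTB, hsharp]
  constructor
  · rw [← h1, h2]
  · rw [hSchouten, hTB]; ring
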